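/- Let P ∈ ℂ[t₁^{±1}, …, t_n^{±1}] be a Laurent polynomial such that for every tuple (a₁, …, a_n) ∈ ℕⁿ, the one-variable Laurent polynomial P(t^{2^{a₁}}, …, t^{2^{a_n}}) ∈ ℂ[t^{±1}] is zero. Then P = 0. -/

import Mathlib

open Finset in
lemma exists_injOn_pow (n : ℕ) (S : Finset (Fin n →₀ ℤ)) :
    ∃ a : Fin n → ℕ, Set.InjOn
      (fun d : Fin n →₀ ℤ => ∑ i : Fin n, d i * (2 ^ (a i) : ℤ)) S := by
  classical
  set C : ℕ := S.sup (fun d => d.support.sup fun i => (d i).natAbs) with hC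
  have hbound : ∀ d ∈ S, ∀ i, |d i| ≤ (C : ℤ) := by
    intro d hd i
    by_cases hi : i ∈ d.support
    · have h1 : (d i).natAbs ≤ d.support.sup (fun i => (d i).natAbs) := le_sup (f := fun i => (d i).natAbs) hi
      have h2 : d.support.sup (fun i => (d i).natAbs) ≤ C := le_sup (f := fun d : Fin n →₀ ℤ => d.support.sup fun i => (d i).natAbs) hd
      rw [Int.abs_eq_natAbs]
      exact_mod_cast h1.trans h2
    · simp [Finsupp.notMem_support_iff.mp hi]
  obtain ⟨B, hB⟩ : ∃ B : ℕ, (2 * C * n : ℤ) < 2 ^ B :=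
    pow_unbounded_of_one_lt _ one_lt_two
  refine ⟨fun i => B * (i + 1), ?_⟩
  intro d hd d' hd' heq
  by_contra hne
  set e : Fin n →₀ ℤ := d - d' with he
  have hene : e ≠ 0 := sub_ne_zero.mpr hne
  have hsum : ∑ i : Fin n, e i * (2 ^ (B * (i + 1)) : ℤ) = 0 := by
    simp only [he, Finsupp.sub_apply, sub_mul, Finset.sum_sub_distrib]
    simpa using sub_eq_zero.mpr heq
  have hsupp : e.support.Nonempty := Finsupp.support_nonempty_iff.mpr hene
  set j : Fin n := e.support.max' hsupp with hj
  have hjmem : j ∈ e.support := e.support.max'_mem hsupp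
  have hje : e j ≠ 0 := Finsupp.mem_support_iff.mp hjmem
  have hsplit : e j * (2 ^ (B * ((j : ℕ) + 1)) : ℤ)
      + ∑ i ∈ Finset.univ.erase j, e i * (2 ^ (B * ((i : ℕ) + 1)) : ℤ)
      = 0 := by
    rw [Finset.add_sum_erase _ (fun i : Fin n => e i * (2 ^ (B * ((i : ℕ) + 1)) : ℤ)) (mem_univ j)]
    exact hsum
  have hebound : ∀ i, |e i| ≤ 2 * C := by
    intro i
    have := hbound d hd i
    have := hbound d' hd' i
    simp only [he, Finsupp.sub_apply]
    calc |d i - d' i| ≤ |d i| + |d' i| := abs_sub _ _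
      _ ≤ 2 * C := by omega
  have hrest : |∑ i ∈ Finset.univ.erase j, e i * (2 ^ (B * ((i : ℕ) + 1)) : ℤ)|
      ≤ 2 * C * n * 2 ^ (B * (j : ℕ)) := by
    calc |∑ i ∈ Finset.univ.erase j, e i * (2 ^ (B * ((i : ℕ) + 1)) : ℤ)|
        ≤ ∑ i ∈ Finset.univ.erase j, |e i * (2 ^ (B * ((i : ℕ) + 1)) : ℤ)| :=
          Finset.abs_sum_le_sum_abs _ _
      _ ≤ ∑ _i ∈ Finset.univ.erase j, (2 * C * 2 ^ (B * (j : ℕ)) : ℤ) := by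
          apply Finset.sum_le_sum
          intro i hi
          rw [abs_mul, abs_pow]
          by_cases hie : e i = 0
          · simp only [hie, abs_zero, zero_mul]
            positivity
          · have hij : i ≠ j := Finset.ne_of_mem_erase hi
            have hilt : i < j := lt_of_le_of_ne (Finset.le_max' _ _ (Finsupp.mem_support_iff.mpr hie)) hij
            have hle : B * ((i : ℕ) + 1) ≤ B * (j : ℕ) :=
              Nat.mul_le_mul_left _ (by exact_mod_cast hilt)
            have h2 : |(2 : ℤ)| ^ (B * ((i : ℕ) + 1)) ≤ (2 : ℤ) ^ (B * (j : ℕ)) := by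
              rw [abs_two]
              exact pow_le_pow_right₀ one_le_two hle
            exact mul_le_mul (hebound i) h2 (by positivity) (by positivity)
      _ ≤ 2 * C * n * 2 ^ (B * (j : ℕ)) := by
          rw [Finset.sum_const, nsmul_eq_mul]
          have hcard : ((Finset.univ.erase j).card : ℤ) ≤ (n : ℤ) := by
            have := Finset.card_erase_le (s := (Finset.univ : Finset (Fin n))) (a := j)
            simp only [Finset.card_univ, Fintype.card_fin] at this
            exact_mod_cast this
          have h1 := mul_le_mul_of_nonneg_right hcard
            (show (0:ℤ) ≤ 2 * C * 2 ^ (B * (j : ℕ)) by positivity)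
          exact h1.trans (le_of_eq (by ring))
  have hmain : (2 : ℤ) ^ (B * ((j : ℕ) + 1)) ≤ |e j * 2 ^ (B * ((j : ℕ) + 1))| := by
    rw [abs_mul, abs_pow, abs_two]
    have h1 : (1 : ℤ) ≤ |e j| := Int.one_le_abs hje
    nlinarith [pow_pos (by norm_num : (0:ℤ) < 2) (B * ((j : ℕ) + 1))]
  have heq2 : |e j * 2 ^ (B * ((j : ℕ) + 1))|
      = |∑ i ∈ Finset.univ.erase j, e i * (2 ^ (B * ((i : ℕ) + 1)) : ℤ)| := by
    rw [← abs_neg]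
    congr 1
    linarith [hsplit]
  have hpow : (2 : ℤ) ^ (B * ((j : ℕ) + 1)) = 2 ^ B * 2 ^ (B * (j : ℕ)) := by
    rw [← pow_add]; ring_nf
  nlinarith [pow_pos (by norm_num : (0:ℤ) < 2) (B * (j : ℕ))]

theorem stmt_9 (n : ℕ) (P : AddMonoidAlgebra ℂ (Fin n →₀ ℤ))
    (h : ∀ a : Fin n → ℕ,
      (Finsupp.sum P.coeff fun d c =>
          LaurentPolynomial.C c *
            LaurentPolynomial.T (∑ i : Fin n, d i * (2 ^ (a i) : ℤ))) = 0) :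
    P = 0 := by
  classical
  obtain ⟨a, ha⟩ := exists_injOn_pow n P.coeff.support
  have hmap : Finsupp.mapDomain (fun d : Fin n →₀ ℤ => ∑ i : Fin n, d i * (2 ^ (a i) : ℤ)) P.coeff = 0 := by
    rw [Finsupp.mapDomain]
    have hc := congrArg AddMonoidAlgebra.coeff (h a)
    rw [AddMonoidAlgebra.coeff_zero] at hc
    rw [← hc, Finsupp.sum, Finsupp.sum, AddMonoidAlgebra.coeff_sum]
    apply Finset.sum_congr rfl
    intro d _
    rw [← LaurentPolynomial.single_eq_C_mul_T, AddMonoidAlgebra.coeff_single]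
  have := Finsupp.mapDomain_injOn (M := ℂ) (↑P.coeff.support : Set (Fin n →₀ ℤ)) ha
  refine AddMonoidAlgebra.coeff_injective (this (by simp) (by simp) ?_)
  rw [hmap, AddMonoidAlgebra.coeff_zero, Finsupp.mapDomain_zero]
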